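/- Every rational simplicial $d$-cone $C \subset \mathbb{R}^d$, $d \ge 3$, admits a unimodular triangulation $C = D_1 \cup \cdots \cup D_T$ such that $\operatorname{Hilb}(D_t) \subset \frac{d}{2}\left(\frac{3}{2}\right)^{\mu(\Delta_C)-2} \Delta_C$ for all $t$. -/

import Mathlib

open Pointwise

/-- The cone generated by a finite set `s` of integer vectors. -/
def coneFS (d : ℕ) (s : Finset (Fin d → ℤ)) : Set (Fin d → ℝ) :=
  {x | ∃ c : (Fin d → ℤ) → ℝ, (∀ w, 0 ≤ c w) ∧ x = ∑ w ∈ s, c w • fun j => (w j : ℝ)}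

/-- The cone generated by a finite family of integer vectors. -/
def coneFam (d m : ℕ) (v : Fin m → Fin d → ℤ) : Set (Fin d → ℝ) :=
  {x | ∃ c : Fin m → ℝ, (∀ i, 0 ≤ c i) ∧ x = ∑ i, c i • fun j => (v i j : ℝ)}

/-- An integer vector is primitive if no natural number `n ≠ 1` divides all its entries. -/
def Primitive (d : ℕ) (w : Fin d → ℤ) : Prop := ∀ n : ℕ, (∀ j, (n : ℤ) ∣ w j) → n = 1

noncomputable section
namespace Stmt14

variable {d : ℕ}

/-- real coercion of an integer vector -/
def rz (w : Fin d → ℤ) : Fin d → ℝ := fun j => (w j : ℝ)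

lemma rz_inj : Function.Injective (rz (d := d)) := by
  intro a b h
  funext j
  have := congrFun h j
  simp only [rz] at this
  exact_mod_cast this

lemma rz_sum {α : Type*} (t : Finset α) (g : α → Fin d → ℤ) :
    rz (∑ w ∈ t, g w) = ∑ w ∈ t, rz (g w) := by
  funext j
  simp [rz, Finset.sum_apply]

lemma rz_sub (a b : Fin d → ℤ) : rz (a - b) = rz a - rz b := by
  funext j; simp [rz]

lemma rz_zsmul (n : ℤ) (a : Fin d → ℤ) : rz (n • a) = (n : ℝ) • rz a := by
  funext j; simp [rz]

lemma rz_zero : rz (0 : Fin d → ℤ) = 0 := by funext j; simp [rz]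

lemma rz_eq_zero {a : Fin d → ℤ} (h : rz a = 0) : a = 0 := rz_inj (by rw [h, rz_zero])

/-- membership in `coneFS` with nonnegativity only required on `s` -/
lemma mem_coneFS_iff {s : Finset (Fin d → ℤ)} {x : Fin d → ℝ} :
    x ∈ coneFS d s ↔ ∃ c : (Fin d → ℤ) → ℝ, (∀ w ∈ s, 0 ≤ c w) ∧ x = ∑ w ∈ s, c w • rz w := by
  constructor
  · rintro ⟨c, hc, rfl⟩
    exact ⟨c, fun w _ => hc w, rfl⟩
  · rintro ⟨c, hc, rfl⟩
    refine ⟨fun w => if w ∈ s then c w else 0, ?_, ?_⟩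
    · intro w
      by_cases h : w ∈ s <;> simp [h, hc w]
    · exact (Finset.sum_congr rfl fun w hw => by simp only []; rw [if_pos hw]; rfl).symm

lemma coneFS_mono {s t : Finset (Fin d → ℤ)} (h : s ⊆ t) : coneFS d s ⊆ coneFS d t := by
  intro x hx
  rw [mem_coneFS_iff] at hx ⊢
  obtain ⟨c, hc, rfl⟩ := hx
  refine ⟨fun w => if w ∈ s then c w else 0, ?_, ?_⟩
  · intro w _; by_cases hw : w ∈ s <;> simp [hw]; exact hc w hw
  · rw [← Finset.sum_subset h]
    · exact Finset.sum_congr rfl fun w hw => by simp [hw]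
    · intro w _ hw; simp [hw]

/-- linear independence of the elements of a finset, in concrete form -/
def IndepOn (s : Finset (Fin d → ℤ)) : Prop :=
  ∀ c : (Fin d → ℤ) → ℝ, ∑ w ∈ s, c w • rz w = 0 → ∀ w ∈ s, c w = 0

lemma rep_unique {s : Finset (Fin d → ℤ)} (hs : IndepOn s) {c c' : (Fin d → ℤ) → ℝ}
    (h : ∑ w ∈ s, c w • rz w = ∑ w ∈ s, c' w • rz w) : ∀ w ∈ s, c w = c' w := by
  have h0 : ∑ w ∈ s, (c w - c' w) • rz w = 0 := by
    simp only [sub_smul, Finset.sum_sub_distrib, h, sub_self]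
  intro w hw
  have := hs _ h0 w hw
  linarith


section Enum
variable {d : ℕ}

/-- a chosen enumeration of a finset of cardinality `d` -/
def enum (s : Finset (Fin d → ℤ)) (h : s.card = d) : Fin d → (Fin d → ℤ) :=
  fun i => (s.equivFin.symm (Fin.cast h.symm i) : Fin d → ℤ)

lemma enum_mem (s : Finset (Fin d → ℤ)) (h : s.card = d) (i : Fin d) : enum s h i ∈ s :=
  (s.equivFin.symm (Fin.cast h.symm i)).2

lemma enum_inj (s : Finset (Fin d → ℤ)) (h : s.card = d) : Function.Injective (enum s h) := by
  intro i j hij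
  have : s.equivFin.symm (Fin.cast h.symm i) = s.equivFin.symm (Fin.cast h.symm j) :=
    Subtype.ext hij
  have := s.equivFin.symm.injective this
  simpa [Fin.ext_iff] using this

lemma enum_image (s : Finset (Fin d → ℤ)) (h : s.card = d) :
    Finset.image (enum s h) Finset.univ = s := by
  apply Finset.eq_of_subset_of_card_le
  · intro w hw
    simp only [Finset.mem_image] at hw
    obtain ⟨i, _, rfl⟩ := hw
    exact enum_mem s h i
  · rw [h, Finset.card_image_of_injective _ (enum_inj s h)]
    simp

lemma enum_surj (s : Finset (Fin d → ℤ)) (h : s.card = d) {w : Fin d → ℤ} (hw : w ∈ s) :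
    ∃ i, enum s h i = w := by
  have := enum_image s h
  rw [← this] at hw
  simp only [Finset.mem_image] at hw
  obtain ⟨i, _, rfl⟩ := hw
  exact ⟨i, rfl⟩

/-- sum over a finset as sum over an enumeration -/
lemma sum_enum {M : Type*} [AddCommMonoid M] (s : Finset (Fin d → ℤ)) (h : s.card = d)
    (f : (Fin d → ℤ) → M) : ∑ w ∈ s, f w = ∑ i, f (enum s h i) := by
  have h1 : ∑ w ∈ s, f w = ∑ w ∈ Finset.image (enum s h) Finset.univ, f w :=
    Finset.sum_congr (enum_image s h).symm (fun _ _ => rfl)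
  rw [h1, Finset.sum_image (fun i _ j _ hij => enum_inj s h hij)]

end Enum

section Mat
variable {d : ℕ}

def matR (a : Fin d → (Fin d → ℤ)) : Matrix (Fin d) (Fin d) ℝ :=
  Matrix.of fun i j => ((a i j : ℤ) : ℝ)

def matZ (a : Fin d → (Fin d → ℤ)) : Matrix (Fin d) (Fin d) ℤ :=
  Matrix.of fun i j => a i j

lemma matR_det (a : Fin d → (Fin d → ℤ)) : (matR a).det = ((matZ a).det : ℝ) := by
  rw [show matR a = (Int.castRingHom ℝ).mapMatrix (matZ a) from rfl]
  rw [← RingHom.map_det]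
  rfl

lemma matR_row (a : Fin d → (Fin d → ℤ)) (i : Fin d) : matR a i = rz (a i) := rfl

/-- abs of determinant only depends on the set of rows -/
lemma natAbs_det_congr (a b : Fin d → (Fin d → ℤ)) (ha : Function.Injective a)
    (hb : Function.Injective b) (hab : Set.range a = Set.range b) :
    ((matZ a).det).natAbs = ((matZ b).det).natAbs := by
  have hmem : ∀ i, b i ∈ Set.range a := by
    intro i; rw [hab]; exact ⟨i, rfl⟩
  choose g hg using hmem
  have hginj : Function.Injective g := by
    intro i j hij
    apply hb
    rw [← hg i, ← hg j, hij]
  let σ : Equiv.Perm (Fin d) := Equiv.ofBijective g (Finite.injective_iff_bijective.mp hginj)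
  have : matZ b = (matZ a).submatrix σ id := by
    ext i j
    simp [matZ, σ, Equiv.ofBijective, Matrix.submatrix, ← hg i]
  rw [this, Matrix.det_permute]
  rw [Int.natAbs_mul]
  simp [Int.units_natAbs]

/-- multiplicity of a simplicial cone given by a finset of cardinality d -/
def mu (s : Finset (Fin d → ℤ)) : ℕ :=
  if h : s.card = d then ((matZ (enum s h)).det).natAbs else 0

lemma mu_eq_of_enum {s : Finset (Fin d → ℤ)} (h : s.card = d) (a : Fin d → (Fin d → ℤ))
    (ha : Function.Injective a) (hmem : ∀ i, a i ∈ s) :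
    mu s = ((matZ a).det).natAbs := by
  rw [mu, dif_pos h]
  apply natAbs_det_congr _ _ (enum_inj s h) ha
  have h1 : Set.range (enum s h) = (s : Set (Fin d → ℤ)) := by
    ext w
    constructor
    · rintro ⟨i, rfl⟩; exact enum_mem s h i
    · intro hw; obtain ⟨i, hi⟩ := enum_surj s h hw; exact ⟨i, hi⟩
  have himg : Finset.image a Finset.univ = s := by
    apply Finset.eq_of_subset_of_card_le
    · intro w hw
      simp only [Finset.mem_image] at hw
      obtain ⟨i, _, rfl⟩ := hw
      exact hmem i
    · rw [h, Finset.card_image_of_injective _ ha]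
      simp
  have h2 : Set.range a = (s : Set (Fin d → ℤ)) := by
    rw [← himg, Finset.coe_image, Finset.coe_univ, Set.image_univ]
  rw [h1, h2]

end Mat

section Det
variable {d : ℕ}

lemma image_univ_eq {s : Finset (Fin d → ℤ)} (h : s.card = d) {a : Fin d → (Fin d → ℤ)}
    (ha : Function.Injective a) (hmem : ∀ i, a i ∈ s) : Finset.image a Finset.univ = s := by
  apply Finset.eq_of_subset_of_card_le
  · intro w hw
    simp only [Finset.mem_image] at hw
    obtain ⟨i, _, rfl⟩ := hw
    exact hmem i
  · rw [h, Finset.card_image_of_injective _ ha]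
    simp

lemma sum_of_enum' {M : Type*} [AddCommMonoid M] {s : Finset (Fin d → ℤ)} (h : s.card = d)
    {a : Fin d → (Fin d → ℤ)} (ha : Function.Injective a) (hmem : ∀ i, a i ∈ s)
    (f : (Fin d → ℤ) → M) : ∑ w ∈ s, f w = ∑ i, f (a i) := by
  have h1 : ∑ w ∈ s, f w = ∑ w ∈ Finset.image a Finset.univ, f w :=
    Finset.sum_congr (image_univ_eq h ha hmem).symm (fun _ _ => rfl)
  rw [h1, Finset.sum_image (fun i _ j _ hij => ha hij)]

lemma mem_enum' {s : Finset (Fin d → ℤ)} (h : s.card = d) {a : Fin d → (Fin d → ℤ)}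
    (ha : Function.Injective a) (hmem : ∀ i, a i ∈ s) {w : Fin d → ℤ} (hw : w ∈ s) :
    ∃ i, a i = w := by
  have := image_univ_eq h ha hmem
  rw [← this] at hw
  simp only [Finset.mem_image] at hw
  obtain ⟨i, _, rfl⟩ := hw
  exact ⟨i, rfl⟩

lemma filter_eq_singleton {a : Fin d → (Fin d → ℤ)} (ha : Function.Injective a) (i : Fin d) :
    Finset.univ.filter (fun j => a j = a i) = {i} := by
  ext j
  simp only [Finset.mem_filter, Finset.mem_univ, true_and, Finset.mem_singleton]
  exact ⟨fun hj => ha hj, fun hj => by rw [hj]⟩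

/-- spread a coefficient family indexed by `Fin d` to one indexed by vectors -/
def coeffOf (a : Fin d → (Fin d → ℤ)) (g : Fin d → ℝ) : (Fin d → ℤ) → ℝ :=
  fun w => ∑ i ∈ Finset.univ.filter (fun j => a j = w), g i

lemma coeffOf_apply {a : Fin d → (Fin d → ℤ)} (ha : Function.Injective a) (g : Fin d → ℝ)
    (i : Fin d) : coeffOf a g (a i) = g i := by
  rw [coeffOf, filter_eq_singleton ha, Finset.sum_singleton]

lemma indepOn_iff_li {s : Finset (Fin d → ℤ)} (h : s.card = d) {a : Fin d → (Fin d → ℤ)}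
    (ha : Function.Injective a) (hmem : ∀ i, a i ∈ s) :
    IndepOn s ↔ LinearIndependent ℝ (fun i => rz (a i)) := by
  rw [Fintype.linearIndependent_iff]
  constructor
  · intro hs g hg i
    have hsum : ∑ w ∈ s, coeffOf a g w • rz w = 0 := by
      rw [sum_of_enum' h ha hmem (fun w => coeffOf a g w • rz w)]
      calc ∑ i, coeffOf a g (a i) • rz (a i) = ∑ i, g i • rz (a i) :=
            Finset.sum_congr rfl fun i _ => by rw [coeffOf_apply ha]
        _ = 0 := hg
    have := hs _ hsum (a i) (hmem i)
    rwa [coeffOf_apply ha] at this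
  · intro hli c hc w hw
    obtain ⟨i, rfl⟩ := mem_enum' h ha hmem hw
    refine hli (fun i => c (a i)) ?_ i
    rw [← sum_of_enum' h ha hmem (fun w => c w • rz w)]
    exact hc

lemma indepOn_iff_det {s : Finset (Fin d → ℤ)} (h : s.card = d) {a : Fin d → (Fin d → ℤ)}
    (ha : Function.Injective a) (hmem : ∀ i, a i ∈ s) :
    IndepOn s ↔ (matR a).det ≠ 0 := by
  rw [indepOn_iff_li h ha hmem]
  have : (fun i => rz (a i)) = (matR a).row := rfl
  rw [this, Matrix.linearIndependent_rows_iff_isUnit, Matrix.isUnit_iff_isUnit_det,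
    isUnit_iff_ne_zero]

lemma mu_pos {s : Finset (Fin d → ℤ)} (h : s.card = d) (hs : IndepOn s) : 1 ≤ mu s := by
  rw [mu, dif_pos h]
  have := (indepOn_iff_det h (enum_inj s h) (enum_mem s h)).mp hs
  rw [matR_det] at this
  have : (matZ (enum s h)).det ≠ 0 := fun h0 => this (by rw [h0]; simp)
  omega

lemma span_top_of_mu_one {s : Finset (Fin d → ℤ)} (h : s.card = d) (hmu : mu s = 1) :
    Submodule.span ℤ (s : Set (Fin d → ℤ)) = ⊤ := by
  set a := enum s h with ha
  set A := matZ a with hA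
  have hdet : IsUnit A.det := by
    rw [mu, dif_pos h] at hmu
    have hmu' : A.det.natAbs = 1 := hmu
    rw [Int.isUnit_iff]
    rcases Int.natAbs_eq A.det with he | he
    · left; rw [he, hmu']; rfl
    · right; rw [he, hmu']; rfl
  have hAu : IsUnit A := (Matrix.isUnit_iff_isUnit_det A).mpr hdet
  obtain ⟨u, hu⟩ := hAu
  have hBA : (↑u⁻¹ : Matrix (Fin d) (Fin d) ℤ) * A = 1 := by
    rw [← hu]; exact u.inv_mul
  rw [Submodule.eq_top_iff']
  intro x
  have hsingle : ∀ j : Fin d, Pi.single j (1 : ℤ) ∈ Submodule.span ℤ (s : Set (Fin d → ℤ)) := by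
    intro j
    have hrow : Pi.single j (1 : ℤ) = ∑ i, (↑u⁻¹ : Matrix (Fin d) (Fin d) ℤ) j i • a i := by
      funext k
      have h2 : ((↑u⁻¹ : Matrix (Fin d) (Fin d) ℤ) * A) j k
          = (1 : Matrix (Fin d) (Fin d) ℤ) j k := by rw [hBA]
      rw [Matrix.mul_apply] at h2
      simp only [Finset.sum_apply, Pi.smul_apply, smul_eq_mul]
      have h4 : (∑ x, (↑u⁻¹ : Matrix (Fin d) (Fin d) ℤ) j x * a x k)
          = ((↑u⁻¹ : Matrix (Fin d) (Fin d) ℤ) * A) j k := (Matrix.mul_apply).symm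
      rw [h4, hBA]
      by_cases hjk : j = k <;> simp [Matrix.one_apply, Pi.single_apply, hjk, eq_comm]
    rw [hrow]
    exact Submodule.sum_mem _ fun i _ =>
      Submodule.smul_mem _ _ (Submodule.subset_span (enum_mem s h i))
  have hx : x = ∑ j, x j • Pi.single j (1 : ℤ) := by
    funext k
    simp [Pi.single_apply]
  rw [hx]
  exact Submodule.sum_mem _ fun j _ => Submodule.smul_mem _ _ (hsingle j)

lemma mu_one_of_span_top {s : Finset (Fin d → ℤ)} (h : s.card = d)
    (hspan : Submodule.span ℤ (s : Set (Fin d → ℤ)) = ⊤) : mu s = 1 := by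
  set a := enum s h with ha
  set A := matZ a with hA
  have hsingle : ∀ j : Fin d, ∃ f : (Fin d → ℤ) → ℤ,
      ∑ w ∈ s, f w • w = Pi.single j (1 : ℤ) := by
    intro j
    have : Pi.single j (1 : ℤ) ∈ Submodule.span ℤ (s : Set (Fin d → ℤ)) := by
      rw [hspan]; trivial
    exact (Submodule.mem_span_finset.mp this).imp fun _ h => h.2
  choose f hf using hsingle
  set B : Matrix (Fin d) (Fin d) ℤ := Matrix.of fun j i => f j (a i) with hB
  have hBA : B * A = 1 := by
    ext j k
    rw [Matrix.mul_apply]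
    have h3 := congrFun (hf j) k
    rw [sum_of_enum' h (enum_inj s h) (enum_mem s h) (fun w => f j w • w)] at h3
    simp only [Finset.sum_apply, Pi.smul_apply, smul_eq_mul] at h3
    show (∑ i, f j (a i) * a i k) = (1 : Matrix (Fin d) (Fin d) ℤ) j k
    rw [h3]
    by_cases hjk : j = k <;> simp [Matrix.one_apply, Pi.single_apply, hjk, eq_comm]
  have hdet : B.det * A.det = 1 := by
    rw [← Matrix.det_mul, hBA, Matrix.det_one]
  have : A.det.natAbs = 1 := by
    have h1 : A.det ∣ 1 := ⟨B.det, by linarith [hdet]⟩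
    exact Int.isUnit_iff.mp (isUnit_of_dvd_one h1) |>.elim (fun h => by rw [h]; rfl)
      (fun h => by rw [h]; rfl)
  rw [mu, dif_pos h, ← hA, this]

end Det

section Span
variable {d : ℕ}

lemma exists_rep (hd : 0 < d) {s : Finset (Fin d → ℤ)} (h : s.card = d) (hs : IndepOn s)
    (x : Fin d → ℝ) : ∃ c : (Fin d → ℤ) → ℝ, x = ∑ w ∈ s, c w • rz w := by
  haveI : Nonempty (Fin d) := ⟨⟨0, hd⟩⟩
  have li := (indepOn_iff_li h (enum_inj s h) (enum_mem s h)).mp hs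
  have hcard : Fintype.card (Fin d) = Module.finrank ℝ (Fin d → ℝ) := by
    rw [Module.finrank_fintype_fun_eq_card]
  let b := basisOfLinearIndependentOfCardEqFinrank li hcard
  have hb : ∀ i, b i = rz (enum s h i) := fun i =>
    congrFun (coe_basisOfLinearIndependentOfCardEqFinrank li hcard) i
  refine ⟨coeffOf (enum s h) (fun i => b.repr x i), ?_⟩
  rw [sum_of_enum' h (enum_inj s h) (enum_mem s h)
    (fun w => coeffOf (enum s h) (fun i => b.repr x i) w • rz w)]
  calc x = ∑ i, b.repr x i • b i := (Module.Basis.sum_repr b x).symm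
    _ = ∑ i, coeffOf (enum s h) (fun i => b.repr x i) (enum s h i) • rz (enum s h i) :=
      Finset.sum_congr rfl fun i _ => by rw [coeffOf_apply (enum_inj s h), hb]

end Span

section Phi
variable {d : ℕ} {v : Fin d → Fin d → ℤ}

/-- the coordinate-sum functional of a basis -/
def phi (b : Module.Basis (Fin d) ℝ (Fin d → ℝ)) (x : Fin d → ℝ) : ℝ := ∑ i, b.repr x i

lemma phi_sum_smul (b : Module.Basis (Fin d) ℝ (Fin d → ℝ)) {α : Type*} (t : Finset α) (c : α → ℝ)
    (y : α → (Fin d → ℝ)) : phi b (∑ a ∈ t, c a • y a) = ∑ a ∈ t, c a * phi b (y a) := by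
  simp only [phi, map_sum, map_smul, Finset.sum_apply', Finsupp.smul_apply, smul_eq_mul]
  rw [Finset.sum_comm]
  exact Finset.sum_congr rfl fun a _ => by rw [Finset.mul_sum]

lemma phi_basis (b : Module.Basis (Fin d) ℝ (Fin d → ℝ)) (hb : ∀ i, b i = rz (v i)) (i : Fin d) :
    phi b (rz (v i)) = 1 := by
  rw [phi, ← hb]
  simp [Module.Basis.repr_self, Finsupp.single_apply]

lemma repr_of_rep (b : Module.Basis (Fin d) ℝ (Fin d → ℝ)) (hb : ∀ i, b i = rz (v i))
    (c : Fin d → ℝ) (j : Fin d) : b.repr (∑ i, c i • rz (v i)) j = c j := by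
  have : (∑ i, c i • rz (v i)) = ∑ i, c i • b i :=
    Finset.sum_congr rfl fun i _ => by rw [hb]
  rw [this]
  simp [map_sum, map_smul, Finsupp.single_apply, Module.Basis.repr_self]

lemma mem_coneFam_iff {x : Fin d → ℝ} :
    x ∈ coneFam d d v ↔ ∃ c : Fin d → ℝ, (∀ i, 0 ≤ c i) ∧ x = ∑ i, c i • rz (v i) :=
  Iff.rfl

lemma phi_nonneg_of_mem (b : Module.Basis (Fin d) ℝ (Fin d → ℝ)) (hb : ∀ i, b i = rz (v i))
    {x : Fin d → ℝ} (hx : x ∈ coneFam d d v) : 0 ≤ phi b x := by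
  obtain ⟨c, hc, rfl⟩ := mem_coneFam_iff.mp hx
  rw [phi]
  apply Finset.sum_nonneg
  intro i _
  rw [repr_of_rep b hb]
  exact hc i

lemma coneFam_sum_mem {α : Type*} (t : Finset α) (q : α → ℝ) (hq : ∀ a ∈ t, 0 ≤ q a)
    (y : α → (Fin d → ℝ)) (hy : ∀ a ∈ t, y a ∈ coneFam d d v) :
    (∑ a ∈ t, q a • y a) ∈ coneFam d d v := by
  classical
  choose c hc hcy using fun a (ha : a ∈ t) => mem_coneFam_iff.mp (hy a ha)
  refine mem_coneFam_iff.mpr ⟨fun i => ∑ a ∈ t.attach, q a * c a a.2 i, ?_, ?_⟩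
  · intro i
    exact Finset.sum_nonneg fun a _ => mul_nonneg (hq a a.2) (hc a a.2 i)
  · rw [← Finset.sum_attach t (fun a => q a • y a)]
    calc ∑ a ∈ t.attach, q a • y a
        = ∑ a ∈ t.attach, ∑ i, (q a * c a a.2 i) • rz (v i) := by
          refine Finset.sum_congr rfl fun a _ => ?_
          rw [hcy a a.2, Finset.smul_sum]
          exact Finset.sum_congr rfl fun i _ => by rw [smul_smul]
      _ = ∑ i, (∑ a ∈ t.attach, q a * c a a.2 i) • rz (v i) := by
          rw [Finset.sum_comm]
          exact Finset.sum_congr rfl fun i _ => by rw [Finset.sum_smul]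

lemma mem_smul_hull (b : Module.Basis (Fin d) ℝ (Fin d → ℝ)) (hb : ∀ i, b i = rz (v i))
    {x : Fin d → ℝ} {B : ℝ} (hB : 0 < B) (hx : x ∈ coneFam d d v) (hphi : phi b x ≤ B) :
    x ∈ B • convexHull ℝ (insert 0 (Set.range fun i => rz (v i))) := by
  obtain ⟨c, hc, rfl⟩ := mem_coneFam_iff.mp hx
  have hsum : ∑ i, c i = phi b (∑ i, c i • rz (v i)) := by
    rw [phi]
    exact Finset.sum_congr rfl fun i _ => (repr_of_rep b hb c i).symm
  rw [Set.mem_smul_set]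
  refine ⟨B⁻¹ • ∑ i, c i • rz (v i), ?_, smul_inv_smul₀ (ne_of_gt hB) _⟩
  have hrw : B⁻¹ • ∑ i, c i • rz (v i)
      = (1 - ∑ i, c i / B) • (0 : Fin d → ℝ) + ∑ i, (c i / B) • rz (v i) := by
    rw [smul_zero, zero_add, Finset.smul_sum]
    exact Finset.sum_congr rfl fun i _ => by rw [smul_smul, div_eq_inv_mul]
  rw [hrw]
  have hmem : ∀ z ∈ insert (0 : Fin d → ℝ) (Set.range fun i => rz (v i)),
      z ∈ convexHull ℝ (insert 0 (Set.range fun i => rz (v i))) :=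
    fun z hz => subset_convexHull ℝ _ hz
  have hconv := convex_convexHull ℝ (insert (0 : Fin d → ℝ) (Set.range fun i => rz (v i)))
  have := Fintype.sum_option (fun o : Option (Fin d) =>
    (Option.elim o (1 - ∑ i, c i / B) (fun i => c i / B)) •
      (Option.elim o (0 : Fin d → ℝ) (fun i => rz (v i))))
  rw [show ((1 - ∑ i, c i / B) • (0 : Fin d → ℝ) + ∑ i, (c i / B) • rz (v i))
    = ∑ o : Option (Fin d), (Option.elim o (1 - ∑ i, c i / B) (fun i => c i / B)) •
      (Option.elim o (0 : Fin d → ℝ) (fun i => rz (v i))) from by rw [this]; rfl]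
  apply hconv.sum_mem
  · intro o _
    match o with
    | none =>
      have h1 : (∑ i, c i) ≤ B := by rw [hsum]; exact hphi
      have h2 : (∑ i, c i) / B ≤ 1 := by rw [div_le_one hB]; exact h1
      rw [Finset.sum_div] at h2
      simp only [Option.elim]
      linarith
    | some i =>
      simp only [Option.elim]
      exact div_nonneg (hc i) (le_of_lt hB)
  · rw [Fintype.sum_option]
    simp only [Option.elim]
    ring
  · intro o _
    match o with
    | none => exact hmem 0 (Set.mem_insert 0 _)
    | some i => exact hmem _ (Set.mem_insert_of_mem _ ⟨i, rfl⟩)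

lemma coneFS_image_eq (hv : Function.Injective v) :
    coneFS d (Finset.image v Finset.univ) = coneFam d d v := by
  ext x
  constructor
  · intro hx
    obtain ⟨c, hc, rfl⟩ := mem_coneFS_iff.mp hx
    refine mem_coneFam_iff.mpr ⟨fun i => c (v i), fun i => hc (v i) (by simp), ?_⟩
    rw [Finset.sum_image (fun i _ j _ hij => hv hij)]
  · intro hx
    obtain ⟨c, hc, rfl⟩ := mem_coneFam_iff.mp hx
    refine mem_coneFS_iff.mpr ⟨coeffOf v c, ?_, ?_⟩
    · intro w _
      exact Finset.sum_nonneg fun i _ => hc i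
    · rw [Finset.sum_image (fun i _ j _ hij => hv hij)]
      exact Finset.sum_congr rfl fun i _ => by rw [coeffOf_apply hv]

end Phi

section Box
variable {d : ℕ}

lemma exists_box_point (hd : 0 < d) {s : Finset (Fin d → ℤ)} (h : s.card = d)
    (hs : IndepOn s) (hmu : mu s ≠ 1) :
    ∃ (z : Fin d → ℤ) (lam : (Fin d → ℤ) → ℝ), z ≠ 0 ∧ (∀ w ∈ s, 0 ≤ lam w ∧ lam w < 1) ∧
      rz z = ∑ w ∈ s, lam w • rz w := by
  have hspan : Submodule.span ℤ (s : Set (Fin d → ℤ)) ≠ ⊤ :=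
    fun htop => hmu (mu_one_of_span_top h htop)
  have : ¬ ∀ x : Fin d → ℤ, x ∈ Submodule.span ℤ (s : Set (Fin d → ℤ)) := by
    rw [← Submodule.eq_top_iff']; exact hspan
  push_neg at this
  obtain ⟨y, hy⟩ := this
  obtain ⟨c, hc⟩ := exists_rep hd h hs (rz y)
  refine ⟨y - ∑ w ∈ s, ⌊c w⌋ • w, fun w => Int.fract (c w), ?_, ?_, ?_⟩
  · intro h0
    apply hy
    have : y = ∑ w ∈ s, ⌊c w⌋ • w := by
      have := sub_eq_zero.mp h0
      linear_combination (norm := module) this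
    rw [this]
    exact Submodule.sum_mem _ fun w hw => Submodule.smul_mem _ _ (Submodule.subset_span hw)
  · exact fun w _ => ⟨Int.fract_nonneg _, Int.fract_lt_one _⟩
  · rw [rz_sub, rz_sum, hc, ← Finset.sum_sub_distrib]
    refine Finset.sum_congr rfl fun w _ => ?_
    rw [rz_zsmul]
    show c w • rz w - (⌊c w⌋ : ℝ) • rz w = Int.fract (c w) • rz w
    rw [← Int.self_sub_floor, sub_smul]

end Box

section MuNew
variable {d : ℕ}

lemma mu_newc {s : Finset (Fin d → ℤ)} (h : s.card = d) {z : Fin d → ℤ} {g : Fin d → ℤ}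
    (hgs : g ∈ s) (hzs : z ∉ s) {lamP : (Fin d → ℤ) → ℝ}
    (hz : rz z = ∑ w ∈ s, lamP w • rz w) :
    (insert z (s.erase g)).card = d ∧
    ((mu (insert z (s.erase g)) : ℝ) = |lamP g| * (mu s : ℝ)) := by
  classical
  set a := enum s h with ha
  obtain ⟨k, hk⟩ := mem_enum' h (enum_inj s h) (enum_mem s h) hgs
  set a' := Function.update a k z with ha'
  have hdpos : 0 < d := by
    rw [← h]
    exact Finset.card_pos.mpr ⟨g, hgs⟩
  have hzerase : z ∉ s.erase g := fun hmem => hzs (Finset.mem_of_mem_erase hmem)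
  have hcard : (insert z (s.erase g)).card = d := by
    rw [Finset.card_insert_of_notMem hzerase, Finset.card_erase_of_mem hgs, h]
    omega
  have hainj : Function.Injective a := enum_inj s h
  have ha'inj : Function.Injective a' := by
    intro i j hij
    rw [ha'] at hij
    by_cases hi : i = k <;> by_cases hj : j = k
    · rw [hi, hj]
    · rw [hi] at hij ⊢
      rw [Function.update_self, Function.update_of_ne hj] at hij
      exact absurd (hij ▸ enum_mem s h j) hzs
    · rw [hj] at hij ⊢
      rw [Function.update_self, Function.update_of_ne hi] at hij
      exact absurd (hij ▸ enum_mem s h i) hzs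
    · rw [Function.update_of_ne hi, Function.update_of_ne hj] at hij
      exact hainj hij
  have ha'mem : ∀ i, a' i ∈ insert z (s.erase g) := by
    intro i
    by_cases hi : i = k
    · rw [ha', hi, Function.update_self]
      exact Finset.mem_insert_self _ _
    · rw [ha', Function.update_of_ne hi]
      refine Finset.mem_insert_of_mem (Finset.mem_erase.mpr ⟨?_, enum_mem s h i⟩)
      intro hgi
      exact hi (hainj (by rw [hgi, ← hk]))
  have hrowR : matR a' = (matR a).updateRow k (rz z) := by
    ext i j
    by_cases hi : i = k
    · subst hi
      rw [Matrix.updateRow_self]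
      rw [show matR a' i j = ((a' i j : ℤ) : ℝ) from rfl, ha', Function.update_self]
      rfl
    · rw [Matrix.updateRow_ne hi]
      rw [show matR a' i j = ((a' i j : ℤ) : ℝ) from rfl, ha', Function.update_of_ne hi]
      rfl
  have hzrow : rz z = ∑ i, (lamP (a i)) • matR a i := by
    rw [hz, sum_of_enum' h hainj (enum_mem s h) (fun w => lamP w • rz w)]
    rfl
  have hdet : (matR a').det = lamP g * (matR a).det := by
    rw [hrowR, hzrow]
    rw [Matrix.det_updateRow_sum (matR a) k (fun i => lamP (a i))]
    rw [show a k = g from hk]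
    rfl
  refine ⟨hcard, ?_⟩
  have h1 : mu (insert z (s.erase g)) = ((matZ a').det).natAbs :=
    mu_eq_of_enum hcard a' ha'inj ha'mem
  have h2 : mu s = ((matZ a).det).natAbs := mu_eq_of_enum h a hainj (enum_mem s h)
  rw [h1, h2]
  rw [Nat.cast_natAbs, Nat.cast_natAbs]
  push_cast
  rw [show ((matZ a').map fun x => (x : ℝ)) = matR a' from rfl,
    show ((matZ a).map fun x => (x : ℝ)) = matR a from rfl, hdet, abs_mul]

end MuNew

section Stellar
variable {d : ℕ} {z : Fin d → ℤ} {G : Finset (Fin d → ℤ)} {lam : (Fin d → ℤ) → ℝ}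

/-- padded coefficient function -/
def lamP (G : Finset (Fin d → ℤ)) (lam : (Fin d → ℤ) → ℝ) : (Fin d → ℤ) → ℝ :=
  fun w => if w ∈ G then lam w else 0

lemma lamP_nonneg (hlam : ∀ w ∈ G, 0 < lam w ∧ lam w < 1) (w : Fin d → ℤ) :
    0 ≤ lamP G lam w := by
  rw [lamP]
  by_cases hw : w ∈ G
  · rw [if_pos hw]; exact le_of_lt (hlam w hw).1
  · rw [if_neg hw]

lemma pad_rep (hz : rz z = ∑ w ∈ G, lam w • rz w) {u : Finset (Fin d → ℤ)} (hGu : G ⊆ u) :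
    rz z = ∑ w ∈ u, lamP G lam w • rz w := by
  rw [hz]
  calc ∑ w ∈ G, lam w • rz w = ∑ w ∈ G, lamP G lam w • rz w :=
        Finset.sum_congr rfl (fun w hw => by rw [lamP, if_pos hw])
    _ = ∑ w ∈ u, lamP G lam w • rz w :=
        Finset.sum_subset hGu (fun w _ hnw => by rw [lamP, if_neg hnw, zero_smul])

lemma mem_cone_of_mem {u : Finset (Fin d → ℤ)} {w : Fin d → ℤ} (hw : w ∈ u) :
    rz w ∈ coneFS d u := by
  refine mem_coneFS_iff.mpr ⟨fun w' => if w' = w then 1 else 0, ?_, ?_⟩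
  · intro w' _
    by_cases h : w' = w <;> simp [h]
  · rw [Finset.sum_eq_single w (fun b _ hb => by simp [hb]) (fun hw' => absurd hw hw')]
    simp

lemma z_not_mem {s : Finset (Fin d → ℤ)} (hs : IndepOn s)
    (hlam : ∀ w ∈ G, 0 < lam w ∧ lam w < 1) (hz : rz z = ∑ w ∈ G, lam w • rz w)
    (hGs : G ⊆ s) : z ∉ s := by
  intro hzs
  have h1 : rz z = ∑ w ∈ s, (fun w' => if w' = z then (1 : ℝ) else 0) w • rz w := by
    rw [Finset.sum_eq_single z (fun b _ hb => by simp [hb]) (fun hw' => absurd hzs hw')]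
    simp
  have h2 : rz z = ∑ w ∈ s, lamP G lam w • rz w := pad_rep hz hGs
  have h3 := rep_unique hs (h1.symm.trans h2) z hzs
  have h4 : (if z = z then (1:ℝ) else 0) = lamP G lam z := h3
  rw [if_pos rfl, lamP] at h4
  by_cases hzG : z ∈ G
  · rw [if_pos hzG] at h4
    linarith [(hlam z hzG).2]
  · rw [if_neg hzG] at h4
    exact one_ne_zero h4

lemma carrier {F : Finset (Finset (Fin d → ℤ))} {D s : Finset (Fin d → ℤ)}
    (hfaces : ∀ s ∈ F, ∀ t ∈ F, coneFS d s ∩ coneFS d t = coneFS d (s ∩ t))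
    (hindep : ∀ t ∈ F, IndepOn t)
    (hD : D ∈ F) (hs : s ∈ F) (hGD : G ⊆ D)
    (hlam : ∀ w ∈ G, 0 < lam w ∧ lam w < 1) (hz : rz z = ∑ w ∈ G, lam w • rz w)
    (hzs : rz z ∈ coneFS d s) : G ⊆ s := by
  have hmem : rz z ∈ coneFS d (s ∩ D) := by
    rw [← hfaces s hs D hD]
    refine ⟨hzs, ?_⟩
    rw [pad_rep hz hGD]
    exact mem_coneFS_iff.mpr ⟨lamP G lam, fun w _ => lamP_nonneg hlam w, rfl⟩
  obtain ⟨c, hc, hcz⟩ := mem_coneFS_iff.mp hmem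
  have h1 : rz z = ∑ w ∈ D, (fun w' => if w' ∈ s ∩ D then c w' else 0) w • rz w := by
    rw [hcz]
    calc ∑ w ∈ s ∩ D, c w • rz w
        = ∑ w ∈ s ∩ D, (fun w' => if w' ∈ s ∩ D then c w' else 0) w • rz w :=
          Finset.sum_congr rfl (fun w hw => by simp [hw])
      _ = ∑ w ∈ D, (fun w' => if w' ∈ s ∩ D then c w' else 0) w • rz w :=
          Finset.sum_subset Finset.inter_subset_right (fun w _ hnw => by simp [hnw])
  have h2 : rz z = ∑ w ∈ D, lamP G lam w • rz w := pad_rep hz hGD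
  have huniq := rep_unique (hindep D hD) (h1.symm.trans h2)
  intro w hwG
  have hwD : w ∈ D := hGD hwG
  have h4 : (if w ∈ s ∩ D then c w else 0) = lamP G lam w := huniq w hwD
  rw [lamP, if_pos hwG] at h4
  by_cases hws : w ∈ s ∩ D
  · exact (Finset.mem_inter.mp hws).1
  · rw [if_neg hws] at h4
    linarith [(hlam w hwG).1]

/-- coefficient function re-expressing a point inside a subdivided cone -/
def repc (G : Finset (Fin d → ℤ)) (lam : (Fin d → ℤ) → ℝ) (z g : Fin d → ℤ)
    (r : (Fin d → ℤ) → ℝ) : (Fin d → ℤ) → ℝ :=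
  fun w => if w = z then r g / lam g else r w - lamP G lam w * (r g / lam g)

lemma build_rep {u : Finset (Fin d → ℤ)} {g : Fin d → ℤ} {x : Fin d → ℝ}
    {r : (Fin d → ℤ) → ℝ}
    (hlam : ∀ w ∈ G, 0 < lam w ∧ lam w < 1) (hz : rz z = ∑ w ∈ G, lam w • rz w)
    (hGu : G ⊆ u) (hzu : z ∉ u) (hgG : g ∈ G)
    (hr : ∀ w ∈ u, 0 ≤ r w) (hx : x = ∑ w ∈ u, r w • rz w)
    (hmin : ∀ w ∈ G, r g * lam w ≤ r w * lam g) :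
    x = (∑ w ∈ insert z (u.erase g), repc G lam z g r w • rz w) ∧
    (∀ w ∈ insert z (u.erase g), 0 ≤ repc G lam z g r w) := by
  have hgu : g ∈ u := hGu hgG
  have hlg : 0 < lam g := (hlam g hgG).1
  have hzerase : z ∉ u.erase g := fun hmem => hzu (Finset.mem_of_mem_erase hmem)
  set q : ℝ := r g / lam g with hqdef
  have hq0 : 0 ≤ q := div_nonneg (hr g hgu) (le_of_lt hlg)
  have hcoef : ∀ w ∈ u.erase g, repc G lam z g r w = r w - lamP G lam w * q := by
    intro w hw
    have hwz : w ≠ z := fun hwz => hzerase (hwz ▸ hw)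
    rw [repc, if_neg hwz]
  constructor
  · rw [Finset.sum_insert hzerase]
    have hcz : repc G lam z g r z = q := by rw [repc, if_pos rfl]
    have e1 : q • rz z = ∑ w ∈ u, (lamP G lam w * q) • rz w := by
      rw [pad_rep hz hGu, Finset.smul_sum]
      exact Finset.sum_congr rfl fun w _ => by rw [smul_smul, mul_comm]
    have hq : lamP G lam g * q = r g := by
      rw [lamP, if_pos hgG, hqdef]
      field_simp
    have h2 : ∑ w ∈ u.erase g, r w • rz w = (∑ w ∈ u, r w • rz w) - r g • rz g := by
      rw [← Finset.add_sum_erase u (fun w => r w • rz w) hgu]; abel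
    have h3 : ∑ w ∈ u.erase g, (lamP G lam w * q) • rz w
        = (∑ w ∈ u, (lamP G lam w * q) • rz w) - r g • rz g := by
      rw [← Finset.add_sum_erase u (fun w => (lamP G lam w * q) • rz w) hgu, hq]; abel
    calc x = ∑ w ∈ u, r w • rz w := hx
      _ = q • rz z + ∑ w ∈ u.erase g, (r w - lamP G lam w * q) • rz w := by
          simp only [sub_smul]
          rw [Finset.sum_sub_distrib, h2, h3, e1]
          abel
      _ = repc G lam z g r z • rz z + ∑ w ∈ u.erase g, repc G lam z g r w • rz w := by
          rw [hcz]
          congr 1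
          exact (Finset.sum_congr rfl fun w hw => by rw [hcoef w hw]).symm
  · intro w hw
    rcases Finset.mem_insert.mp hw with hwz | hwu
    · rw [hwz, repc, if_pos rfl]
      exact hq0
    · rw [hcoef w hwu]
      have hwu' : w ∈ u := Finset.mem_of_mem_erase hwu
      by_cases hwG : w ∈ G
      · rw [lamP, if_pos hwG, sub_nonneg]
        rw [show lam w * q = r g * lam w / lam g from by rw [hqdef]; ring]
        rw [div_le_iff₀ hlg]
        exact hmin w hwG
      · rw [lamP, if_neg hwG, zero_mul, sub_zero]
        exact hr w hwu'

lemma elim_rep {u : Finset (Fin d → ℤ)} {g : Fin d → ℤ} {x : Fin d → ℝ}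
    (hlam : ∀ w ∈ G, 0 < lam w ∧ lam w < 1) (hz : rz z = ∑ w ∈ G, lam w • rz w)
    (hGu : G ⊆ u) (hzu : z ∉ u) (hgG : g ∈ G)
    (hx : x ∈ coneFS d (insert z (u.erase g))) :
    ∃ r : (Fin d → ℤ) → ℝ, (∀ w ∈ u, 0 ≤ r w) ∧ x = ∑ w ∈ u, r w • rz w ∧
      (∀ w ∈ G, r g * lam w ≤ r w * lam g) := by
  have hgu : g ∈ u := hGu hgG
  have hlg : 0 < lam g := (hlam g hgG).1
  have hzerase : z ∉ u.erase g := fun hmem => hzu (Finset.mem_of_mem_erase hmem)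
  obtain ⟨c, hc, hcx⟩ := mem_coneFS_iff.mp hx
  have hcz : 0 ≤ c z := hc z (Finset.mem_insert_self _ _)
  set r : (Fin d → ℤ) → ℝ :=
    fun w => (if w ∈ u.erase g then c w else 0) + c z * lamP G lam w with hrdef
  refine ⟨r, ?_, ?_, ?_⟩
  · intro w hw
    apply add_nonneg
    · by_cases hwe : w ∈ u.erase g
      · rw [if_pos hwe]; exact hc w (Finset.mem_insert_of_mem hwe)
      · rw [if_neg hwe]
    · exact mul_nonneg hcz (lamP_nonneg hlam w)
  · have e0 : x = c z • rz z + ∑ w ∈ u.erase g, c w • rz w := by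
      rw [hcx, Finset.sum_insert hzerase]
    have e1 : c z • rz z = ∑ w ∈ u, (c z * lamP G lam w) • rz w := by
      rw [pad_rep hz hGu, Finset.smul_sum]
      exact Finset.sum_congr rfl fun w _ => by rw [smul_smul]
    have e2 : ∑ w ∈ u.erase g, c w • rz w
        = ∑ w ∈ u, (if w ∈ u.erase g then c w else 0) • rz w := by
      calc ∑ w ∈ u.erase g, c w • rz w
          = ∑ w ∈ u.erase g, (if w ∈ u.erase g then c w else 0) • rz w :=
            Finset.sum_congr rfl (fun w hw => by rw [if_pos hw])
        _ = ∑ w ∈ u, (if w ∈ u.erase g then c w else 0) • rz w :=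
            Finset.sum_subset (Finset.erase_subset _ _)
              (fun w _ hnw => by rw [if_neg hnw, zero_smul])
    rw [e0, e1, e2, ← Finset.sum_add_distrib]
    exact Finset.sum_congr rfl fun w _ => by rw [← add_smul, hrdef]; ring_nf
  · intro w hwG
    have hrg : r g = c z * lam g := by
      rw [hrdef]
      simp [lamP, hgG, Finset.notMem_erase]
    have hrw : r w = (if w ∈ u.erase g then c w else 0) + c z * lam w := by
      rw [hrdef]
      simp only [lamP, if_pos hwG]
    have hite : 0 ≤ (if w ∈ u.erase g then c w else 0) := by
      by_cases hwe : w ∈ u.erase g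
      · rw [if_pos hwe]; exact hc w (Finset.mem_insert_of_mem hwe)
      · rw [if_neg hwe]
    have hlw : 0 < lam w := (hlam w hwG).1
    rw [hrg, hrw]
    have : c z * lam g * lam w = c z * lam w * lam g := by ring
    rw [this, add_mul]
    nlinarith [mul_nonneg hite (le_of_lt hlg)]

lemma rep_transfer {s u : Finset (Fin d → ℤ)} (hs : IndepOn s) (hus : u ⊆ s)
    {x : Fin d → ℝ} {r t : (Fin d → ℤ) → ℝ}
    (hx : x = ∑ w ∈ u, r w • rz w) (ht : x = ∑ w ∈ s, t w • rz w) :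
    ∀ w ∈ s, t w = if w ∈ u then r w else 0 := by
  have hpad : x = ∑ w ∈ s, (fun w' => if w' ∈ u then r w' else 0) w • rz w := by
    rw [hx]
    calc ∑ w ∈ u, r w • rz w
        = ∑ w ∈ u, (if w ∈ u then r w else 0) • rz w :=
          Finset.sum_congr rfl (fun w hw => by rw [if_pos hw])
      _ = ∑ w ∈ s, (if w ∈ u then r w else 0) • rz w :=
          Finset.sum_subset hus (fun w _ hnw => by rw [if_neg hnw, zero_smul])
  exact rep_unique hs (ht.symm.trans hpad)

lemma coneFS_drop {u : Finset (Fin d → ℤ)} {x : Fin d → ℝ} {c : (Fin d → ℤ) → ℝ}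
    {h' : Fin d → ℤ} (hc : ∀ w ∈ u, 0 ≤ c w) (hx : x = ∑ w ∈ u, c w • rz w)
    (h0 : c h' = 0) : x ∈ coneFS d (u.erase h') := by
  refine mem_coneFS_iff.mpr ⟨c, fun w hw => hc w (Finset.mem_of_mem_erase hw), ?_⟩
  rw [hx, Finset.sum_erase u (by rw [h0, zero_smul])]

lemma cone_union (hlam : ∀ w ∈ G, 0 < lam w ∧ lam w < 1)
    (hz : rz z = ∑ w ∈ G, lam w • rz w) {s : Finset (Fin d → ℤ)}
    (hGs : G ⊆ s) (hzs : z ∉ s) (hGne : G.Nonempty) :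
    coneFS d s = ⋃ g ∈ G, coneFS d (insert z (s.erase g)) := by
  apply Set.Subset.antisymm
  · intro x hx
    obtain ⟨c, hc, hcx⟩ := mem_coneFS_iff.mp hx
    obtain ⟨g, hgG, hgmin⟩ := Finset.exists_min_image G (fun g => c g / lam g) hGne
    have hmin : ∀ w ∈ G, c g * lam w ≤ c w * lam g := by
      intro w hw
      exact (div_le_div_iff₀ (hlam g hgG).1 (hlam w hw).1).mp (hgmin w hw)
    obtain ⟨hbx, hbn⟩ := build_rep hlam hz hGs hzs hgG hc hcx hmin
    refine Set.mem_biUnion hgG (mem_coneFS_iff.mpr ⟨_, hbn, hbx⟩)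
  · intro x hx
    obtain ⟨g, hgG', hx'⟩ := Set.mem_iUnion₂.mp hx
    obtain ⟨r, hrn, hrx, _⟩ := elim_rep hlam hz hGs hzs hgG' hx'
    exact mem_coneFS_iff.mpr ⟨r, hrn, hrx⟩

lemma cone_new_new (hlam : ∀ w ∈ G, 0 < lam w ∧ lam w < 1)
    (hz : rz z = ∑ w ∈ G, lam w • rz w) {s t : Finset (Fin d → ℤ)}
    (hs : IndepOn s) (ht : IndepOn t) (hGs : G ⊆ s) (hGt : G ⊆ t)
    (hzs : z ∉ s) (hzt : z ∉ t)
    (hface : coneFS d s ∩ coneFS d t = coneFS d (s ∩ t))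
    {g h' : Fin d → ℤ} (hg : g ∈ G) (hh : h' ∈ G) :
    coneFS d (insert z (s.erase g)) ∩ coneFS d (insert z (t.erase h'))
      = coneFS d (insert z (s.erase g) ∩ insert z (t.erase h')) := by
  have hGst : G ⊆ s ∩ t := Finset.subset_inter hGs hGt
  have hzst : z ∉ s ∩ t := fun hm => hzs (Finset.mem_inter.mp hm).1
  have hzh : z ≠ h' := fun he => hzs (hGs (he ▸ hh))
  have hfinset : insert z (s.erase g) ∩ insert z (t.erase h')
      = insert z (((s ∩ t).erase g).erase h') := by
    ext u
    simp only [Finset.mem_inter, Finset.mem_insert, Finset.mem_erase]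
    by_cases hu : u = z
    · simp [hu]
    · simp only [hu, false_or]
      tauto
  apply Set.Subset.antisymm
  · rintro x ⟨hx1, hx2⟩
    obtain ⟨r1, hr1n, hr1x, hr1min⟩ := elim_rep hlam hz hGs hzs hg hx1
    obtain ⟨r2, hr2n, hr2x, hr2min⟩ := elim_rep hlam hz hGt hzt hh hx2
    have hxst : x ∈ coneFS d (s ∩ t) := by
      rw [← hface]
      exact ⟨mem_coneFS_iff.mpr ⟨r1, hr1n, hr1x⟩, mem_coneFS_iff.mpr ⟨r2, hr2n, hr2x⟩⟩
    obtain ⟨r, hrn, hrx⟩ := mem_coneFS_iff.mp hxst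
    have htr1 := rep_transfer hs Finset.inter_subset_left hrx hr1x
    have htr2 := rep_transfer ht Finset.inter_subset_right hrx hr2x
    set rp : (Fin d → ℤ) → ℝ := fun w => if w ∈ s ∩ t then r w else 0 with hrpdef
    have hrpval : ∀ w ∈ G, rp w = r1 w := by
      intro w hw
      rw [htr1 w (hGs hw)]
    have hrpval2 : ∀ w ∈ G, rp w = r2 w := by
      intro w hw
      rw [htr2 w (hGt hw)]
    have hrpn : ∀ w ∈ s ∩ t, 0 ≤ rp w := by
      intro w hw
      rw [hrpdef]
      simp only [if_pos hw]
      exact hrn w hw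
    have hrpx : x = ∑ w ∈ s ∩ t, rp w • rz w := by
      rw [hrx]
      exact Finset.sum_congr rfl (fun w hw => by
        show r w • rz w = (if w ∈ s ∩ t then r w else 0) • rz w
        rw [if_pos hw])
    have hminp : ∀ w ∈ G, rp g * lam w ≤ rp w * lam g := by
      intro w hw
      rw [hrpval g hg, hrpval w hw]
      exact hr1min w hw
    have hminq : ∀ w ∈ G, rp h' * lam w ≤ rp w * lam h' := by
      intro w hw
      rw [hrpval2 h' hh, hrpval2 w hw]
      exact hr2min w hw
    have heq : rp h' * lam g = rp g * lam h' :=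
      le_antisymm (hminq g hg) (hminp h' hh)
    obtain ⟨hbx, hbn⟩ := build_rep hlam hz hGst hzst hg hrpn hrpx hminp
    rw [hfinset]
    by_cases hgh : h' = g
    · rw [hgh, Finset.erase_idem]
      exact mem_coneFS_iff.mpr ⟨_, hbn, hbx⟩
    · have hc0 : repc G lam z g rp h' = 0 := by
        rw [repc, if_neg (fun he => hzh he.symm), lamP, if_pos hh]
        have hlg : (0:ℝ) < lam g := (hlam g hg).1
        field_simp
        linarith [heq]
      have hdrop := coneFS_drop hbn hbx hc0
      rwa [Finset.erase_insert_of_ne hzh] at hdrop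
  · apply Set.subset_inter
    · exact coneFS_mono Finset.inter_subset_left
    · exact coneFS_mono Finset.inter_subset_right

lemma cone_new_old (hlam : ∀ w ∈ G, 0 < lam w ∧ lam w < 1)
    (hz : rz z = ∑ w ∈ G, lam w • rz w) {s t : Finset (Fin d → ℤ)}
    (hs : IndepOn s) (hGs : G ⊆ s) (hzs : z ∉ s)
    (hzt : rz z ∉ coneFS d t)
    (hface : coneFS d s ∩ coneFS d t = coneFS d (s ∩ t))
    {g : Fin d → ℤ} (hg : g ∈ G) (hGt : ¬ G ⊆ t) :
    coneFS d (insert z (s.erase g)) ∩ coneFS d t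
      = coneFS d (insert z (s.erase g) ∩ t) := by
  have hznt : z ∉ t := fun hm => hzt (mem_cone_of_mem hm)
  have hfinset : insert z (s.erase g) ∩ t = (s ∩ t).erase g := by
    ext u
    simp only [Finset.mem_inter, Finset.mem_insert, Finset.mem_erase]
    by_cases hu : u = z
    · subst hu
      simp only [true_or, true_and]
      constructor
      · intro hut; exact absurd hut hznt
      · intro h; exact absurd h.2.2 hznt
    · simp only [hu, false_or]
      tauto
  apply Set.Subset.antisymm
  · rintro x ⟨hx1, hx2⟩
    obtain ⟨r1, hr1n, hr1x, hr1min⟩ := elim_rep hlam hz hGs hzs hg hx1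
    have hxst : x ∈ coneFS d (s ∩ t) := by
      rw [← hface]
      exact ⟨mem_coneFS_iff.mpr ⟨r1, hr1n, hr1x⟩, hx2⟩
    obtain ⟨r, hrn, hrx⟩ := mem_coneFS_iff.mp hxst
    have htr1 := rep_transfer hs Finset.inter_subset_left hrx hr1x
    obtain ⟨k, hkG, hknt⟩ := Finset.not_subset.mp hGt
    have hk0 : r1 k = 0 := by
      rw [htr1 k (hGs hkG), if_neg (fun hm => hknt (Finset.mem_inter.mp hm).2)]
    have hg0 : r1 g = 0 := by
      have h1 := hr1min k hkG
      rw [hk0, zero_mul] at h1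
      have h2 : 0 < lam k := (hlam k hkG).1
      have h3 : 0 ≤ r1 g := hr1n g (hGs hg)
      nlinarith
    set rp : (Fin d → ℤ) → ℝ := fun w => if w ∈ s ∩ t then r w else 0 with hrpdef
    have hrpn : ∀ w ∈ s ∩ t, 0 ≤ rp w := by
      intro w hw
      rw [hrpdef]
      simp only [if_pos hw]
      exact hrn w hw
    have hrpx : x = ∑ w ∈ s ∩ t, rp w • rz w := by
      rw [hrx]
      exact Finset.sum_congr rfl (fun w hw => by
        show r w • rz w = (if w ∈ s ∩ t then r w else 0) • rz w
        rw [if_pos hw])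
    have hrpg : rp g = 0 := by
      show (if g ∈ s ∩ t then r g else 0) = 0
      by_cases hgm : g ∈ s ∩ t
      · have h5 := htr1 g (hGs hg)
        rw [if_pos hgm] at h5
        rw [if_pos hgm, ← h5, hg0]
      · rw [if_neg hgm]
    rw [hfinset]
    exact coneFS_drop hrpn hrpx hrpg
  · apply Set.subset_inter
    · exact coneFS_mono Finset.inter_subset_left
    · exact coneFS_mono Finset.inter_subset_right

end Stellar

section Helpers
variable {α β : Type*} [DecidableEq α] [DecidableEq β]

lemma nat_sum_union_le (A B : Finset α) (f : α → ℕ) :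
    ∑ x ∈ A ∪ B, f x ≤ ∑ x ∈ A, f x + ∑ x ∈ B, f x := by
  have := Finset.sum_union_inter (s₁ := A) (s₂ := B) (f := f)
  omega

lemma nat_sum_biUnion_le (s : Finset α) (t : α → Finset β) (f : β → ℕ) :
    ∑ x ∈ s.biUnion t, f x ≤ ∑ a ∈ s, ∑ x ∈ t a, f x := by
  classical
  induction s using Finset.induction_on with
  | empty => simp
  | @insert a s' h ih =>
      rw [Finset.biUnion_insert, Finset.sum_insert h]
      have h1 := Finset.sum_union_inter (s₁ := t a) (s₂ := s'.biUnion t) (f := f)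
      omega

lemma nat_sum_image_le (t : Finset α) (g : α → β) (f : β → ℕ) :
    ∑ x ∈ t.image g, f x ≤ ∑ a ∈ t, f (g a) := by
  classical
  induction t using Finset.induction_on with
  | empty => simp
  | @insert a s' h ih =>
      rw [Finset.image_insert, Finset.sum_insert h]
      by_cases hm : g a ∈ Finset.image g s'
      · rw [Finset.insert_eq_self.mpr hm]; omega
      · rw [Finset.sum_insert hm]; omega

end Helpers

section Fan
variable {d : ℕ}

lemma indepOn_of_mu_pos {s : Finset (Fin d → ℤ)} (h : s.card = d) (hmu : 1 ≤ mu s) :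
    IndepOn s := by
  apply (indepOn_iff_det h (enum_inj s h) (enum_mem s h)).mpr
  rw [matR_det]
  rw [mu, dif_pos h] at hmu
  intro h0
  have : (matZ (enum s h)).det = 0 := by exact_mod_cast h0
  omega

/-- invariants of the fan during subdivision -/
structure GoodF (d : ℕ) (v : Fin d → Fin d → ℤ) (b : Module.Basis (Fin d) ℝ (Fin d → ℝ))
    (Bd : ℝ) (mu0 : ℕ) (F : Finset (Finset (Fin d → ℤ))) : Prop where
  cards : ∀ s ∈ F, s.card = d
  indep : ∀ s ∈ F, IndepOn s
  cover : (⋃ s ∈ F, coneFS d s) = coneFam d d v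
  faces : ∀ s ∈ F, ∀ t ∈ F, coneFS d s ∩ coneFS d t = coneFS d (s ∩ t)
  genC : ∀ s ∈ F, ∀ w ∈ s, rz w ∈ coneFam d d v
  genB : ∀ s ∈ F, ∀ w ∈ s, phi b (rz w) ≤ Bd
  mule : ∀ s ∈ F, mu s ≤ mu0
  sphi : ∀ s ∈ F, (∑ w ∈ s, phi b (rz w)) ≤ (d : ℝ) * ((3:ℝ)/2) ^ (mu0 - mu s)

def fanMeasure (d : ℕ) (F : Finset (Finset (Fin d → ℤ))) : ℕ :=
  ∑ s ∈ F, (d + 1) ^ (mu s)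

lemma step {v : Fin d → Fin d → ℤ} {b : Module.Basis (Fin d) ℝ (Fin d → ℝ)}
    (hb : ∀ i, b i = rz (v i)) {Bd : ℝ} {mu0 : ℕ} {F : Finset (Finset (Fin d → ℤ))}
    (hd : 0 < d)
    (hB2 : ∀ m : ℕ, 2 ≤ m → m ≤ mu0 → (d:ℝ)/2 * ((3:ℝ)/2)^(mu0 - m) ≤ Bd)
    (hGF : GoodF d v b Bd mu0 F) {D : Finset (Fin d → ℤ)} (hD : D ∈ F)
    (hmuD : mu D ≠ 1) :
    ∃ F', GoodF d v b Bd mu0 F' ∧ fanMeasure d F' < fanMeasure d F := by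
  classical
  have hcD : D.card = d := hGF.cards D hD
  have hiD : IndepOn D := hGF.indep D hD
  have hmuD1 : 1 ≤ mu D := mu_pos hcD hiD
  have hmuD2 : 2 ≤ mu D := by omega
  -- box point
  obtain ⟨z0, lam0, hz0ne, hlam0, hz0⟩ := exists_box_point hd hcD hiD hmuD
  set G0 : Finset (Fin d → ℤ) := D.filter (fun w => lam0 w ≠ 0) with hG0def
  have hG0D : G0 ⊆ D := Finset.filter_subset _ _
  have hz0G : rz z0 = ∑ w ∈ G0, lam0 w • rz w := by
    rw [hz0]
    exact (Finset.sum_filter_of_ne (fun w hw hne => by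
      intro h0
      exact hne (by rw [h0, zero_smul]))).symm
  have hlam0G : ∀ w ∈ G0, 0 < lam0 w ∧ lam0 w < 1 := by
    intro w hw
    obtain ⟨hwD, hwne⟩ := Finset.mem_filter.mp hw
    have := hlam0 w hwD
    exact ⟨lt_of_le_of_ne this.1 (Ne.symm hwne), this.2⟩
  have hG0ne : G0.Nonempty := by
    rw [Finset.nonempty_iff_ne_empty]
    intro hemp
    apply hz0ne
    apply rz_eq_zero
    rw [hz0G, hemp, Finset.sum_empty]
  -- φ-s
  set SG : ℝ := ∑ w ∈ G0, phi b (rz w) with hSGdef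
  have hphiz0 : phi b (rz z0) = ∑ w ∈ G0, lam0 w * phi b (rz w) := by
    rw [hz0G]
    exact phi_sum_smul b G0 lam0 (fun w => rz w)
  -- choose z with φ(z) ≤ SG/2
  obtain ⟨z, lam, hlamG, hzG, hphiz⟩ :
      ∃ (z : Fin d → ℤ) (lam : (Fin d → ℤ) → ℝ),
        (∀ w ∈ G0, 0 < lam w ∧ lam w < 1) ∧ (rz z = ∑ w ∈ G0, lam w • rz w) ∧
        phi b (rz z) ≤ SG / 2 := by
    rcases le_or_gt (phi b (rz z0)) (SG / 2) with hc | hc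
    · exact ⟨z0, lam0, hlam0G, hz0G, hc⟩
    · refine ⟨(∑ w ∈ G0, w) - z0, fun w => 1 - lam0 w, ?_, ?_, ?_⟩
      · intro w hw
        have h5 := hlam0G w hw
        refine ⟨?_, ?_⟩
        · show (0:ℝ) < 1 - lam0 w
          linarith [h5.2]
        · show (1:ℝ) - lam0 w < 1
          linarith [h5.1]
      · rw [rz_sub, rz_sum, hz0G, ← Finset.sum_sub_distrib]
        exact Finset.sum_congr rfl fun w _ => by rw [sub_smul, one_smul]
      · have h1 : phi b (rz ((∑ w ∈ G0, w) - z0))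
            = ∑ w ∈ G0, (1 - lam0 w) * phi b (rz w) := by
          rw [show rz ((∑ w ∈ G0, w) - z0) = ∑ w ∈ G0, (1 - lam0 w) • rz w from by
            rw [rz_sub, rz_sum, hz0G, ← Finset.sum_sub_distrib]
            exact Finset.sum_congr rfl fun w _ => by rw [sub_smul, one_smul]]
          exact phi_sum_smul b G0 (fun w => 1 - lam0 w) (fun w => rz w)
        have h2 : (∑ w ∈ G0, (1 - lam0 w) * phi b (rz w))
            = SG - ∑ w ∈ G0, lam0 w * phi b (rz w) := by
          rw [hSGdef, ← Finset.sum_sub_distrib]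
          exact Finset.sum_congr rfl fun w _ => by ring
        rw [h1, h2, ← hphiz0]
        linarith
  have hzD : rz z = ∑ w ∈ D, lamP G0 lam w • rz w := pad_rep hzG hG0D
  -- the new fan
  set Fsub : Finset (Finset (Fin d → ℤ)) := F.filter (fun s => G0 ⊆ s) with hFsubdef
  set Fold : Finset (Finset (Fin d → ℤ)) := F.filter (fun s => ¬ G0 ⊆ s) with hFolddef
  set Fnew : Finset (Finset (Fin d → ℤ)) :=
    Fsub.biUnion (fun s => G0.image (fun g => insert z (s.erase g))) with hFnewdef
  have hDsub : D ∈ Fsub := Finset.mem_filter.mpr ⟨hD, hG0D⟩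
  -- facts about members
  have hsubF : ∀ s ∈ Fsub, s ∈ F ∧ G0 ⊆ s := fun s hs => by
    obtain ⟨h1, h2⟩ := Finset.mem_filter.mp hs; exact ⟨h1, h2⟩
  have holdF : ∀ t ∈ Fold, t ∈ F ∧ ¬ G0 ⊆ t := fun t ht => by
    obtain ⟨h1, h2⟩ := Finset.mem_filter.mp ht; exact ⟨h1, h2⟩
  have hznots : ∀ s ∈ Fsub, z ∉ s := fun s hs =>
    z_not_mem (hGF.indep s (hsubF s hs).1) hlamG hzG (hsubF s hs).2
  have hznotold : ∀ t ∈ Fold, rz z ∉ coneFS d t := by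
    intro t ht hmem
    exact (holdF t ht).2 (carrier hGF.faces hGF.indep hD (holdF t ht).1 hG0D hlamG hzG hmem)
  -- mu facts for new cones
  have hmunew : ∀ s ∈ Fsub, ∀ g ∈ G0,
      (insert z (s.erase g)).card = d ∧
      ((mu (insert z (s.erase g)) : ℝ) = lam g * (mu s : ℝ)) := by
    intro s hs g hg
    have hgs : g ∈ s := (hsubF s hs).2 hg
    have hzs : z ∉ s := hznots s hs
    have hzspad : rz z = ∑ w ∈ s, lamP G0 lam w • rz w := pad_rep hzG (hsubF s hs).2
    obtain ⟨hc, hm⟩ := mu_newc (hGF.cards s (hsubF s hs).1) hgs hzs hzspad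
    refine ⟨hc, ?_⟩
    rw [hm, lamP, if_pos hg, abs_of_pos (hlamG g hg).1]
  have hmult : ∀ s ∈ Fsub, ∀ g ∈ G0,
      1 ≤ mu (insert z (s.erase g)) ∧ mu (insert z (s.erase g)) < mu s := by
    intro s hs g hg
    have hmus : 1 ≤ mu s := mu_pos (hGF.cards s (hsubF s hs).1) (hGF.indep s (hsubF s hs).1)
    have heq := (hmunew s hs g hg).2
    have hl := hlamG g hg
    constructor
    · by_contra hnot
      have h0 : mu (insert z (s.erase g)) = 0 := by omega
      rw [h0] at heq
      have hms : (1:ℝ) ≤ (mu s : ℝ) := by exact_mod_cast hmus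
      have hpos : (0:ℝ) < lam g * (mu s : ℝ) := mul_pos hl.1 (by linarith)
      rw [Nat.cast_zero] at heq
      linarith
    · have hlt : (mu (insert z (s.erase g)) : ℝ) < (mu s : ℝ) := by
        rw [heq]
        have hms : (1:ℝ) ≤ (mu s : ℝ) := by exact_mod_cast hmus
        nlinarith [hl.1, hl.2]
      exact_mod_cast hlt
  have hnewcard : ∀ s ∈ Fsub, ∀ g ∈ G0, (insert z (s.erase g)).card = d :=
    fun s hs g hg => (hmunew s hs g hg).1
  have hnewindep : ∀ s ∈ Fsub, ∀ g ∈ G0, IndepOn (insert z (s.erase g)) :=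
    fun s hs g hg => indepOn_of_mu_pos (hnewcard s hs g hg) (hmult s hs g hg).1
  -- membership characterization of Fnew
  have hmemFnew : ∀ u ∈ Fnew, ∃ s ∈ Fsub, ∃ g ∈ G0, u = insert z (s.erase g) := by
    intro u hu
    obtain ⟨s, hs, hu2⟩ := Finset.mem_biUnion.mp hu
    obtain ⟨g, hg, hgu⟩ := Finset.mem_image.mp hu2
    exact ⟨s, hs, g, hg, hgu.symm⟩
  refine ⟨Fold ∪ Fnew, ?_, ?_⟩
  · constructor
    -- cards
    · intro u hu
      rcases Finset.mem_union.mp hu with h1 | h1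
      · exact hGF.cards u (holdF u h1).1
      · obtain ⟨s, hs, g, hg, rfl⟩ := hmemFnew u h1
        exact hnewcard s hs g hg
    -- indep
    · intro u hu
      rcases Finset.mem_union.mp hu with h1 | h1
      · exact hGF.indep u (holdF u h1).1
      · obtain ⟨s, hs, g, hg, rfl⟩ := hmemFnew u h1
        exact hnewindep s hs g hg
    -- cover
    · rw [← hGF.cover]
      apply Set.Subset.antisymm
      · intro x hx
        obtain ⟨u, hu, hxu⟩ := Set.mem_iUnion₂.mp hx
        rcases Finset.mem_union.mp hu with h1 | h1
        · exact Set.mem_biUnion (holdF u h1).1 hxu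
        · obtain ⟨s, hs, g, hg, rfl⟩ := hmemFnew u h1
          have hcu := cone_union hlamG hzG (hsubF s hs).2 (hznots s hs) hG0ne
          have : x ∈ coneFS d s := by
            rw [hcu]
            exact Set.mem_biUnion hg hxu
          exact Set.mem_biUnion (hsubF s hs).1 this
      · intro x hx
        obtain ⟨s, hs, hxs⟩ := Set.mem_iUnion₂.mp hx
        by_cases hGs : G0 ⊆ s
        · have hssub : s ∈ Fsub := Finset.mem_filter.mpr ⟨hs, hGs⟩
          have hcu := cone_union hlamG hzG hGs (hznots s hssub) hG0ne
          rw [hcu] at hxs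
          obtain ⟨g, hg, hxg⟩ := Set.mem_iUnion₂.mp hxs
          refine Set.mem_biUnion (Finset.mem_union_right _ ?_) hxg
          exact Finset.mem_biUnion.mpr ⟨s, hssub, Finset.mem_image.mpr ⟨g, hg, rfl⟩⟩
        · exact Set.mem_biUnion (Finset.mem_union_left _
            (Finset.mem_filter.mpr ⟨hs, hGs⟩)) hxs
    -- faces
    · intro u1 hu1 u2 hu2
      rcases Finset.mem_union.mp hu1 with h1 | h1 <;> rcases Finset.mem_union.mp hu2 with h2 | h2
      · exact hGF.faces u1 (holdF u1 h1).1 u2 (holdF u2 h2).1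
      · obtain ⟨s, hs, g, hg, rfl⟩ := hmemFnew u2 h2
        rw [Set.inter_comm, Finset.inter_comm]
        exact cone_new_old hlamG hzG (hGF.indep s (hsubF s hs).1) (hsubF s hs).2
          (hznots s hs) (hznotold u1 h1)
          (hGF.faces s (hsubF s hs).1 u1 (holdF u1 h1).1) hg (holdF u1 h1).2
      · obtain ⟨s, hs, g, hg, rfl⟩ := hmemFnew u1 h1
        exact cone_new_old hlamG hzG (hGF.indep s (hsubF s hs).1) (hsubF s hs).2
          (hznots s hs) (hznotold u2 h2)
          (hGF.faces s (hsubF s hs).1 u2 (holdF u2 h2).1) hg (holdF u2 h2).2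
      · obtain ⟨s, hs, g, hg, rfl⟩ := hmemFnew u1 h1
        obtain ⟨t, ht, g', hg', rfl⟩ := hmemFnew u2 h2
        exact cone_new_new hlamG hzG (hGF.indep s (hsubF s hs).1)
          (hGF.indep t (hsubF t ht).1) (hsubF s hs).2 (hsubF t ht).2
          (hznots s hs) (hznots t ht)
          (hGF.faces s (hsubF s hs).1 t (hsubF t ht).1) hg hg'
    -- genC
    · intro u hu w hw
      rcases Finset.mem_union.mp hu with h1 | h1
      · exact hGF.genC u (holdF u h1).1 w hw
      · obtain ⟨s, hs, g, hg, rfl⟩ := hmemFnew u h1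
        rcases Finset.mem_insert.mp hw with hwz | hws
        · subst hwz
          rw [hzG]
          exact coneFam_sum_mem G0 lam (fun w' hw' => le_of_lt (hlamG w' hw').1)
            (fun w' => rz w') (fun w' hw' => hGF.genC D hD w' (hG0D hw'))
        · exact hGF.genC s (hsubF s hs).1 w (Finset.mem_of_mem_erase hws)
    -- genB
    · intro u hu w hw
      rcases Finset.mem_union.mp hu with h1 | h1
      · exact hGF.genB u (holdF u h1).1 w hw
      · obtain ⟨s, hs, g, hg, rfl⟩ := hmemFnew u h1
        rcases Finset.mem_insert.mp hw with hwz | hws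
        · subst hwz
          have hSGle : SG ≤ ∑ w' ∈ D, phi b (rz w') := by
            apply Finset.sum_le_sum_of_subset_of_nonneg hG0D
            intro w' hw' _
            exact phi_nonneg_of_mem b hb (hGF.genC D hD w' hw')
          have hsp := hGF.sphi D hD
          have := hB2 (mu D) hmuD2 (hGF.mule D hD)
          calc phi b (rz w) ≤ SG / 2 := hphiz
            _ ≤ (∑ w' ∈ D, phi b (rz w')) / 2 := by linarith
            _ ≤ ((d : ℝ) * ((3:ℝ)/2) ^ (mu0 - mu D)) / 2 := by linarith
            _ = (d:ℝ)/2 * ((3:ℝ)/2)^(mu0 - mu D) := by ring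
            _ ≤ Bd := this
        · exact hGF.genB s (hsubF s hs).1 w (Finset.mem_of_mem_erase hws)
    -- mule
    · intro u hu
      rcases Finset.mem_union.mp hu with h1 | h1
      · exact hGF.mule u (holdF u h1).1
      · obtain ⟨s, hs, g, hg, rfl⟩ := hmemFnew u h1
        have := (hmult s hs g hg).2
        have := hGF.mule s (hsubF s hs).1
        omega
    -- sphi
    · intro u hu
      rcases Finset.mem_union.mp hu with h1 | h1
      · exact hGF.sphi u (holdF u h1).1
      · obtain ⟨s, hs, g, hg, rfl⟩ := hmemFnew u h1
        have hsF : s ∈ F := (hsubF s hs).1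
        have hgs : g ∈ s := (hsubF s hs).2 hg
        have hzs : z ∉ s.erase g := fun hm => hznots s hs (Finset.mem_of_mem_erase hm)
        have hphig : 0 ≤ phi b (rz g) := phi_nonneg_of_mem b hb (hGF.genC s hsF g hgs)
        have hphinn : ∀ w ∈ s, 0 ≤ phi b (rz w) :=
          fun w hw => phi_nonneg_of_mem b hb (hGF.genC s hsF w hw)
        have hSGle : SG ≤ ∑ w ∈ s, phi b (rz w) := by
          apply Finset.sum_le_sum_of_subset_of_nonneg (hsubF s hs).2
          intro w hw _
          exact hphinn w hw
        have hsum1 : ∑ w ∈ insert z (s.erase g), phi b (rz w)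
            = phi b (rz z) + ∑ w ∈ s.erase g, phi b (rz w) := Finset.sum_insert hzs
        have hsum2 : ∑ w ∈ s.erase g, phi b (rz w)
            = (∑ w ∈ s, phi b (rz w)) - phi b (rz g) := by
          rw [← Finset.add_sum_erase s (fun w => phi b (rz w)) hgs]
          ring
        have hsps := hGF.sphi s hsF
        have hmus0 : mu s ≤ mu0 := hGF.mule s hsF
        have hmlt := (hmult s hs g hg).2
        have hexp : mu0 - mu s + 1 ≤ mu0 - mu (insert z (s.erase g)) := by omega
        have hpow : ((3:ℝ)/2) ^ (mu0 - mu s + 1) ≤ ((3:ℝ)/2)^(mu0 - mu (insert z (s.erase g))) :=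
          pow_le_pow_right₀ (by norm_num) hexp
        have hd0 : (0:ℝ) ≤ (d:ℝ) := Nat.cast_nonneg d
        calc ∑ w ∈ insert z (s.erase g), phi b (rz w)
            = phi b (rz z) + ((∑ w ∈ s, phi b (rz w)) - phi b (rz g)) := by
              rw [hsum1, hsum2]
          _ ≤ SG / 2 + (∑ w ∈ s, phi b (rz w)) := by linarith
          _ ≤ (3:ℝ)/2 * ((d : ℝ) * ((3:ℝ)/2) ^ (mu0 - mu s)) := by linarith
          _ = (d : ℝ) * ((3:ℝ)/2) ^ (mu0 - mu s + 1) := by rw [pow_succ]; ring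
          _ ≤ (d : ℝ) * ((3:ℝ)/2)^(mu0 - mu (insert z (s.erase g))) := by nlinarith
  -- measure decreases
  · have hFsplit : F = Fold ∪ Fsub := by
      rw [hFolddef, hFsubdef]
      ext u
      simp only [Finset.mem_union, Finset.mem_filter]
      tauto
    have hdisj : Disjoint Fold Fsub := by
      rw [Finset.disjoint_left]
      intro u hu1 hu2
      exact (Finset.mem_filter.mp hu1).2 (Finset.mem_filter.mp hu2).2
    have hmF : fanMeasure d F = fanMeasure d Fold + fanMeasure d Fsub := by
      rw [hFsplit, fanMeasure, fanMeasure, fanMeasure, Finset.sum_union hdisj]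
    have hGcard : G0.card ≤ d := le_trans (Finset.card_le_card hG0D) (le_of_eq hcD)
    have hinner : ∀ s ∈ Fsub, ∑ u ∈ G0.image (fun g => insert z (s.erase g)),
        (d+1)^(mu u) < (d+1)^(mu s) := by
      intro s hs
      have hmus : 1 ≤ mu s := mu_pos (hGF.cards s (hsubF s hs).1) (hGF.indep s (hsubF s hs).1)
      calc ∑ u ∈ G0.image (fun g => insert z (s.erase g)), (d+1)^(mu u)
          ≤ ∑ g ∈ G0, (d+1)^(mu (insert z (s.erase g))) :=
            nat_sum_image_le G0 _ (fun u => (d+1)^(mu u))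
        _ ≤ ∑ _g ∈ G0, (d+1)^(mu s - 1) := by
            apply Finset.sum_le_sum
            intro g hg
            apply Nat.pow_le_pow_right (by omega)
            have := (hmult s hs g hg).2
            omega
        _ = G0.card * (d+1)^(mu s - 1) := by rw [Finset.sum_const, smul_eq_mul]
        _ ≤ d * (d+1)^(mu s - 1) := Nat.mul_le_mul_right _ hGcard
        _ < (d+1) * (d+1)^(mu s - 1) := by
            have hp : 0 < (d+1)^(mu s - 1) := Nat.pow_pos (by omega)
            exact mul_lt_mul_of_pos_right (by omega) hp
        _ = (d+1)^(mu s) := by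
            rw [← pow_succ']
            congr 1
            omega
    calc fanMeasure d (Fold ∪ Fnew)
        ≤ fanMeasure d Fold + fanMeasure d Fnew :=
          nat_sum_union_le Fold Fnew (fun u => (d+1)^(mu u))
      _ ≤ fanMeasure d Fold + ∑ s ∈ Fsub, ∑ u ∈ G0.image (fun g => insert z (s.erase g)),
            (d+1)^(mu u) := by
          have h7 := nat_sum_biUnion_le Fsub (fun s => G0.image (fun g => insert z (s.erase g)))
            (fun u => (d+1)^(mu u))
          have h8 : fanMeasure d Fnew = ∑ u ∈ Fsub.biUnion
              (fun s => G0.image (fun g => insert z (s.erase g))), (d+1)^(mu u) := rfl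
          omega
      _ < fanMeasure d Fold + ∑ s ∈ Fsub, (d+1)^(mu s) := by
          have hlt := Finset.sum_lt_sum_of_nonempty ⟨D, hDsub⟩ hinner
          omega
      _ = fanMeasure d F := by rw [hmF]; rfl

lemma loop {v : Fin d → Fin d → ℤ} {b : Module.Basis (Fin d) ℝ (Fin d → ℝ)} {Bd : ℝ} {mu0 : ℕ}
    (hd : 0 < d) (hb : ∀ i, b i = rz (v i))
    (hB2 : ∀ m : ℕ, 2 ≤ m → m ≤ mu0 → (d:ℝ)/2 * ((3:ℝ)/2)^(mu0 - m) ≤ Bd) :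
    ∀ N F, fanMeasure d F ≤ N → GoodF d v b Bd mu0 F →
    ∃ F', GoodF d v b Bd mu0 F' ∧ ∀ s ∈ F', mu s = 1 := by
  intro N
  induction N using Nat.strong_induction_on with
  | _ N ih =>
    intro F hm hG
    by_cases hall : ∀ s ∈ F, mu s = 1
    · exact ⟨F, hG, hall⟩
    · push_neg at hall
      obtain ⟨D, hD, hmuD⟩ := hall
      obtain ⟨F', hG', hlt⟩ := step hb hd hB2 hG hD hmuD
      have h1 : fanMeasure d F' < N := lt_of_lt_of_le hlt hm
      exact ih (fanMeasure d F') h1 F' (le_refl _) hG'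

end Fan

end Stmt14


open Stmt14 in
theorem stmt14 (d : ℕ) (hd : 3 ≤ d) (v : Fin d → Fin d → ℤ)
    (hprim : ∀ i, Primitive d (v i))
    (hind : LinearIndependent ℝ (fun i => fun j => (v i j : ℝ))) :
    ∃ F : Finset (Finset (Fin d → ℤ)),
      -- each cone of the triangulation is unimodular (its `d` generators are a ℤ-basis of ℤ^d),
      -- so its Hilbert basis is exactly its set of generators
      (∀ s ∈ F, s.card = d ∧ Submodule.span ℤ (s : Set (Fin d → ℤ)) = ⊤) ∧
      -- the cones cover `C`
      (⋃ s ∈ F, coneFS d s) = coneFam d d v ∧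
      -- and they pairwise intersect in common faces
      (∀ s ∈ F, ∀ t ∈ F, coneFS d s ∩ coneFS d t = coneFS d (s ∩ t)) ∧
      -- `Hilb(D_t) ⊆ (d/2)(3/2)^(μ(Δ_C)-2) Δ_C`
      ∀ s ∈ F, ∀ w ∈ s, (fun j => (w j : ℝ)) ∈
        (((d : ℝ) / 2 * ((3 : ℝ) / 2) ^
            ((((Matrix.of fun i j => v i j).det.natAbs : ℤ)) - 2)) •
          convexHull ℝ (insert 0 (Set.range fun i => fun j => (v i j : ℝ)))) := by
  classical
  have hd0 : 0 < d := by omega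
  haveI : Nonempty (Fin d) := ⟨⟨0, hd0⟩⟩
  have hind' : LinearIndependent ℝ (fun i => rz (v i)) := hind
  have hvinj : Function.Injective v := by
    intro i j hij
    exact hind'.injective (by rw [hij])
  set s0 : Finset (Fin d → ℤ) := Finset.image v Finset.univ with hs0def
  have h0 : s0.card = d := by
    rw [hs0def, Finset.card_image_of_injective _ hvinj, Finset.card_univ, Fintype.card_fin]
  have hmem0 : ∀ i, v i ∈ s0 := fun i => Finset.mem_image.mpr ⟨i, Finset.mem_univ i, rfl⟩
  set mu0 : ℕ := mu s0 with hmu0def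
  have hdet : mu0 = ((Matrix.of fun i j => v i j).det).natAbs :=
    mu_eq_of_enum h0 v hvinj hmem0
  have hindep0 : IndepOn s0 := (indepOn_iff_li h0 hvinj hmem0).mpr hind'
  have hmu0pos : 1 ≤ mu0 := mu_pos h0 hindep0
  have hcard : Fintype.card (Fin d) = Module.finrank ℝ (Fin d → ℝ) := by
    rw [Module.finrank_fintype_fun_eq_card]
  set b : Module.Basis (Fin d) ℝ (Fin d → ℝ) := basisOfLinearIndependentOfCardEqFinrank hind' hcard
    with hbdef
  have hb : ∀ i, b i = rz (v i) := fun i =>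
    congrFun (coe_basisOfLinearIndependentOfCardEqFinrank hind' hcard) i
  set Bd : ℝ := (d:ℝ)/2 * ((3:ℝ)/2)^((mu0 : ℤ) - 2) with hBddef
  have h32 : (1:ℝ) ≤ (3:ℝ)/2 := by norm_num
  have hB2 : ∀ m : ℕ, 2 ≤ m → m ≤ mu0 → (d:ℝ)/2 * ((3:ℝ)/2)^(mu0 - m) ≤ Bd := by
    intro m hm2 hmle
    rw [hBddef]
    apply mul_le_mul_of_nonneg_left _ (by positivity : (0:ℝ) ≤ (d:ℝ)/2)
    rw [show ((3:ℝ)/2)^(mu0 - m) = ((3:ℝ)/2)^(((mu0 - m : ℕ) : ℤ)) from (zpow_natCast _ _).symm]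
    apply zpow_le_zpow_right₀ h32
    have : ((mu0 - m : ℕ) : ℤ) = (mu0 : ℤ) - m := by
      rw [Nat.cast_sub hmle]
    rw [this]
    omega
  have hBd1 : (1:ℝ) ≤ Bd := by
    have hz1 : ((3:ℝ)/2)^(-1 : ℤ) ≤ ((3:ℝ)/2)^((mu0 : ℤ) - 2) :=
      zpow_le_zpow_right₀ h32 (by omega)
    have hz2 : ((3:ℝ)/2)^(-1 : ℤ) = 2/3 := by norm_num
    have hd3 : (3:ℝ) ≤ (d:ℝ) := by exact_mod_cast hd
    have : (d:ℝ)/2 * (2/3) ≤ Bd := by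
      rw [hBddef]
      apply mul_le_mul_of_nonneg_left _ (by positivity : (0:ℝ) ≤ (d:ℝ)/2)
      rw [← hz2]
      exact hz1
    linarith
  have hBdpos : 0 < Bd := lt_of_lt_of_le one_pos hBd1
  -- initial fan
  have hG0 : GoodF d v b Bd mu0 {s0} := by
    constructor
    · intro s hs
      rw [Finset.mem_singleton.mp hs]
      exact h0
    · intro s hs
      rw [Finset.mem_singleton.mp hs]
      exact hindep0
    · ext x
      simp only [Finset.mem_singleton, Set.mem_iUnion, exists_prop, exists_eq_left]
      rw [coneFS_image_eq hvinj]
    · intro s hs t ht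
      rw [Finset.mem_singleton.mp hs, Finset.mem_singleton.mp ht, Finset.inter_self,
        Set.inter_self]
    · intro s hs w hw
      rw [Finset.mem_singleton.mp hs] at hw
      rw [← coneFS_image_eq hvinj]
      exact mem_cone_of_mem hw
    · intro s hs w hw
      rw [Finset.mem_singleton.mp hs] at hw
      obtain ⟨i, _, rfl⟩ := Finset.mem_image.mp hw
      rw [phi_basis b hb]
      exact hBd1
    · intro s hs
      rw [Finset.mem_singleton.mp hs]
    · intro s hs
      rw [Finset.mem_singleton.mp hs]
      have : ∑ w ∈ s0, phi b (rz w) = ∑ i, phi b (rz (v i)) := by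
        rw [hs0def, Finset.sum_image (fun i _ j _ hij => hvinj hij)]
      rw [this]
      have : ∑ i, phi b (rz (v i)) = (d:ℝ) := by
        rw [Finset.sum_congr rfl (fun i _ => phi_basis b hb i)]
        simp
      rw [this, Nat.sub_self, pow_zero, mul_one]
  obtain ⟨F', hGF', hall⟩ := loop hd0 hb hB2 (fanMeasure d {s0}) {s0} (le_refl _) hG0
  refine ⟨F', ?_, hGF'.cover, hGF'.faces, ?_⟩
  · intro s hs
    exact ⟨hGF'.cards s hs, span_top_of_mu_one (hGF'.cards s hs) (hall s hs)⟩
  · intro s hs w hw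
    have h1 := mem_smul_hull b hb hBdpos (hGF'.genC s hs w hw) (hGF'.genB s hs w hw)
    rw [hBddef] at h1
    rw [← hdet]
    exact h1
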